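/- Let s > 0, γ > 2, let n be a nonzero integer, and let P₀ > 0. Then there exist a > 0 and b > 0 with (4π/3)·a²·b² = P₀ such that the tent function u₀ defined on [0, 2a] by u₀(r) = (b/a)·r for 0 ≤ r ≤ a and u₀(r) = (b/a)·(2a − r) for a < r ≤ 2a satisfies u₀(0) = u₀(2a) = 0, 2π·∫₀^{2a} u₀(r)² r dr = P₀, and J(u₀) ≤ √(6·(1 + n²·(2·ln 2 − 1))·P₀/(π·s²·(γ−1)·(γ−2))), where J is computed with R = 2a. -/

import Mathlib

open MeasureTheory Real Set

lemma ioc_eval {a c : ℝ} (h0 : 0 ≤ a) (hac : a ≤ c) {f g₁ g₂ F₁ F₂ : ℝ → ℝ}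
    (heq1 : Set.EqOn f g₁ (Set.Icc 0 a)) (heq2 : Set.EqOn f g₂ (Set.Icc a c))
    (hc1 : ContinuousOn g₁ (Set.Icc 0 a)) (hc2 : ContinuousOn g₂ (Set.Icc a c))
    (hd1 : ∀ x ∈ Set.Icc 0 a, HasDerivAt F₁ (g₁ x) x)
    (hd2 : ∀ x ∈ Set.Icc a c, HasDerivAt F₂ (g₂ x) x) :
    ∫ r in Set.Ioc 0 c, f r = (F₁ a - F₁ 0) + (F₂ c - F₂ a) := by
  have hu1 : Set.uIcc (0:ℝ) a = Set.Icc 0 a := Set.uIcc_of_le h0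
  have hu2 : Set.uIcc a c = Set.Icc a c := Set.uIcc_of_le hac
  have hi1 : IntervalIntegrable g₁ volume 0 a := by
    apply ContinuousOn.intervalIntegrable; rwa [hu1]
  have hi2 : IntervalIntegrable g₂ volume a c := by
    apply ContinuousOn.intervalIntegrable; rwa [hu2]
  have hf1 : IntervalIntegrable f volume 0 a := by
    rw [intervalIntegrable_iff, Set.uIoc_of_le h0]
    have h := intervalIntegrable_iff.1 hi1
    rw [Set.uIoc_of_le h0] at h
    exact h.congr_fun (fun x hx => (heq1 (Set.Ioc_subset_Icc_self hx)).symm) measurableSet_Ioc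
  have hf2 : IntervalIntegrable f volume a c := by
    rw [intervalIntegrable_iff, Set.uIoc_of_le hac]
    have h := intervalIntegrable_iff.1 hi2
    rw [Set.uIoc_of_le hac] at h
    exact h.congr_fun (fun x hx => (heq2 (Set.Ioc_subset_Icc_self hx)).symm) measurableSet_Ioc
  have h2a : (0:ℝ) ≤ c := le_trans h0 hac
  have e1 : ∫ x in (0:ℝ)..a, f x = ∫ x in (0:ℝ)..a, g₁ x :=
    intervalIntegral.integral_congr (by rwa [hu1])
  have e2 : ∫ x in a..c, f x = ∫ x in a..c, g₂ x :=
    intervalIntegral.integral_congr (by rwa [hu2])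
  rw [← intervalIntegral.integral_of_le h2a,
    ← intervalIntegral.integral_add_adjacent_intervals hf1 hf2, e1, e2,
    intervalIntegral.integral_eq_sub_of_hasDerivAt (fun x hx => hd1 x (hu1 ▸ hx)) hi1,
    intervalIntegral.integral_eq_sub_of_hasDerivAt (fun x hx => hd2 x (hu2 ▸ hx)) hi2]

lemma power_integral (a b : ℝ) (ha : 0 < a) :
    ∫ r in Set.Ioc 0 (2*a), (if r ≤ a then (b/a)*r else (b/a)*(2*a-r))^2 * r
      = 2*a^2*b^2/3 := by
  have ha' : a ≠ 0 := ne_of_gt ha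
  rw [ioc_eval (f := fun r => (if r ≤ a then (b/a)*r else (b/a)*(2*a-r))^2 * r)
      (g₁ := fun r => (b/a)^2*r^3) (g₂ := fun r => (b/a)^2*(4*a^2*r - 4*a*r^2 + r^3))
      (F₁ := fun r => (b/a)^2/4*r^4)
      (F₂ := fun r => (b/a)^2*(2*a^2*r^2 - 4*a/3*r^3 + 1/4*r^4))
      ha.le (by linarith)]
  · field_simp; ring
  · intro r hr; simp only [if_pos hr.2]; ring
  · intro r hr
    by_cases hra : r ≤ a
    · have : r = a := le_antisymm hra hr.1
      subst this; simp only [if_pos le_rfl]; ring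
    · simp only [if_neg hra]; ring
  · fun_prop
  · fun_prop
  · intro x _
    have h := (hasDerivAt_pow 4 x).const_mul ((b/a)^2/4)
    refine h.congr_deriv ?_; norm_num; ring_nf
  · intro x _
    have h := ((((hasDerivAt_pow 2 x).const_mul (2*a^2)).sub
      ((hasDerivAt_pow 3 x).const_mul (4*a/3))).add
      ((hasDerivAt_pow 4 x).const_mul ((1:ℝ)/4))).const_mul ((b/a)^2)
    refine h.congr_deriv ?_; simp only [show (2-1:ℕ)=1 from rfl, show (3-1:ℕ)=2 from rfl, show (4-1:ℕ)=3 from rfl]; push_cast; ring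

lemma kinetic_integral (a b m : ℝ) (ha : 0 < a) :
    ∫ r in Set.Ioc 0 (2*a),
        ((if r ≤ a then b/a else -(b/a))^2
          + (m/r^2) * (if r ≤ a then (b/a)*r else (b/a)*(2*a-r))^2) * r
      = 2*b^2 + m*b^2*(4*Real.log 2 - 2) := by
  have ha' : a ≠ 0 := ne_of_gt ha
  rw [ioc_eval (g₁ := fun r => (1+m)*(b/a)^2*r)
      (g₂ := fun r => (b/a)^2*((1+m)*r + 4*m*a^2/r - 4*m*a))
      (F₁ := fun r => (1+m)*(b/a)^2/2*r^2)
      (F₂ := fun r => (b/a)^2*((1+m)/2*r^2 + 4*m*a^2*Real.log r - 4*m*a*r))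
      ha.le (by linarith)]
  · rw [Real.log_mul two_ne_zero ha']
    field_simp; ring
  · intro r hr
    simp only [if_pos hr.2]
    rcases eq_or_lt_of_le hr.1 with h0 | h0
    · simp [← h0]
    · have hr0 : r ≠ 0 := ne_of_gt h0
      field_simp
  · intro r hr
    have hr0 : r ≠ 0 := ne_of_gt (lt_of_lt_of_le ha hr.1)
    by_cases hra : r ≤ a
    · have : r = a := le_antisymm hra hr.1
      subst this; simp only [if_pos le_rfl]; field_simp; ring
    · simp only [if_neg hra]; field_simp; ring
  · fun_prop
  · have hx0 : ∀ x ∈ Set.Icc a (2*a), x ≠ 0 :=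
      fun x hx => ne_of_gt (lt_of_lt_of_le ha hx.1)
    exact continuousOn_const.mul
      (((continuousOn_const.mul continuousOn_id).add
        (continuousOn_const.div continuousOn_id hx0)).sub continuousOn_const)
  · intro x _
    have h := (hasDerivAt_pow 2 x).const_mul ((1+m)*(b/a)^2/2)
    refine h.congr_deriv ?_; norm_num; ring_nf
  · intro x hx
    have hx0 : x ≠ 0 := ne_of_gt (lt_of_lt_of_le ha hx.1)
    have h := ((((hasDerivAt_pow 2 x).const_mul ((1+m)/2)).add
      ((Real.hasDerivAt_log hx0).const_mul (4*m*a^2))).sub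
      ((hasDerivAt_id x).const_mul (4*m*a))).const_mul ((b/a)^2)
    refine h.congr_deriv ?_; simp only [show (2-1:ℕ)=1 from rfl, show (3-1:ℕ)=2 from rfl, show (4-1:ℕ)=3 from rfl]; push_cast; ring
open intervalIntegral in
lemma ioc_id (c : ℝ) (h : (0:ℝ) ≤ c) : ∫ r in Set.Ioc (0:ℝ) c, r = c^2/2 := by
  rw [← intervalIntegral.integral_of_le h, integral_id]; ring
/-- The tent test function `u₀` has beam power `P₀` and its action `J(u₀)`
(computed on `[0, 2a]`, with the piecewise derivative `u₀'`) satisfies the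
stated optimal bound. -/
theorem saturable_tent_test_function
    (s γ : ℝ) (hs : 0 < s) (hγ : 2 < γ)
    (n : ℤ) (hn : n ≠ 0) (P₀ : ℝ) (hP₀ : 0 < P₀) :
    ∃ a > (0 : ℝ), ∃ b > (0 : ℝ),
      (4 * Real.pi / 3) * a ^ 2 * b ^ 2 = P₀ ∧
      ∃ u₀ u₀' : ℝ → ℝ,
        (∀ r : ℝ, u₀ r = if r ≤ a then (b / a) * r else (b / a) * (2 * a - r)) ∧
        (∀ r : ℝ, u₀' r = if r ≤ a then b / a else -(b / a)) ∧
        u₀ 0 = 0 ∧ u₀ (2 * a) = 0 ∧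
        2 * Real.pi * (∫ r in Set.Ioc (0 : ℝ) (2 * a), (u₀ r) ^ 2 * r) = P₀ ∧
        (1 / 2) * (∫ r in Set.Ioc (0 : ℝ) (2 * a),
              ((u₀' r) ^ 2 + ((n : ℝ) ^ 2 / r ^ 2) * (u₀ r) ^ 2) * r)
          + (1 / (s ^ 2 * (γ - 1) * (γ - 2))) * (∫ r in Set.Ioc (0 : ℝ) (2 * a),
              (1 - (1 + γ * s * (u₀ r) ^ 2) / (1 + s * (u₀ r) ^ 2) ^ γ) * r)
          - (1 / (γ - 2)) * (∫ r in Set.Ioc (0 : ℝ) (2 * a),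
              (u₀ r) ^ 4 / (1 + s * (u₀ r) ^ 2) ^ γ * r)
        ≤ Real.sqrt (6 * (1 + (n : ℝ) ^ 2 * (2 * Real.log 2 - 1)) * P₀
            / (Real.pi * s ^ 2 * (γ - 1) * (γ - 2))) := by
  have hπ : (0:ℝ) < Real.pi := Real.pi_pos
  have hγ1 : (0:ℝ) < γ - 1 := by linarith
  have hγ2 : (0:ℝ) < γ - 2 := by linarith
  have hD : (0:ℝ) < s ^ 2 * (γ - 1) * (γ - 2) :=
    mul_pos (mul_pos (pow_pos hs 2) hγ1) hγ2
  have hlog : (1:ℝ)/2 < Real.log 2 := by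
    have := Real.log_two_gt_d9; linarith
  set K : ℝ := 1 + (n : ℝ) ^ 2 * (2 * Real.log 2 - 1) with hKdef
  have hK : (1:ℝ) ≤ K := by
    have h1 : (0:ℝ) ≤ (n:ℝ)^2 := sq_nonneg _
    nlinarith
  have hK0 : (0:ℝ) < K := by linarith
  set C : ℝ := 3 * P₀ / (2 * Real.pi * (s ^ 2 * (γ - 1) * (γ - 2))) with hCdef
  have hC : (0:ℝ) < C := div_pos (by linarith) (by positivity)
  have hCK : (0:ℝ) < C / K := div_pos hC hK0
  obtain ⟨b, hb, hb2⟩ : ∃ b : ℝ, 0 < b ∧ b ^ 2 = Real.sqrt (C / K) :=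
    ⟨Real.sqrt (Real.sqrt (C / K)), Real.sqrt_pos.2 (Real.sqrt_pos.2 hCK),
      Real.sq_sqrt (Real.sqrt_nonneg _)⟩
  have hb' : b ≠ 0 := ne_of_gt hb
  obtain ⟨a, ha, ha2⟩ : ∃ a : ℝ, 0 < a ∧ a ^ 2 = 3 * P₀ / (4 * Real.pi) / b ^ 2 :=
    ⟨Real.sqrt (3 * P₀ / (4 * Real.pi)) / b,
      div_pos (Real.sqrt_pos.2 (by positivity)) hb,
      by rw [div_pow, Real.sq_sqrt (by positivity)]⟩
  have ha' : a ≠ 0 := ne_of_gt ha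
  have hab : (4 * Real.pi / 3) * a ^ 2 * b ^ 2 = P₀ := by
    rw [ha2]; field_simp
  refine ⟨a, ha, b, hb, hab,
    (fun r => if r ≤ a then (b / a) * r else (b / a) * (2 * a - r)),
    (fun r => if r ≤ a then b / a else -(b / a)),
    fun r => rfl, fun r => rfl, ?_, ?_, ?_, ?_⟩
  · simp [ha.le]
  · have h2a : ¬ (2 * a ≤ a) := by linarith
    simp [h2a]
  · rw [power_integral a b ha, ← hab]; ring
  · rw [kinetic_integral a b ((n:ℝ)^2) ha]
    have hkin : (1/2) * (2*b^2 + (n:ℝ)^2*b^2*(4*Real.log 2 - 2)) = K * b ^ 2 := by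
      rw [hKdef]; ring
    have hid : ∫ r in Set.Ioc (0:ℝ) (2*a), r = 2 * a ^ 2 := by
      rw [ioc_id (2*a) (by linarith)]; ring
    have hI2 : (∫ r in Set.Ioc (0:ℝ) (2*a),
        (1 - (1 + γ * s * ((if r ≤ a then (b/a)*r else (b/a)*(2*a-r))) ^ 2) /
          (1 + s * ((if r ≤ a then (b/a)*r else (b/a)*(2*a-r))) ^ 2) ^ γ) * r)
        ≤ 2 * a ^ 2 := by
      rw [← hid]
      apply integral_mono_of_nonneg
      · rw [Filter.EventuallyLE, ae_restrict_iff' measurableSet_Ioc]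
        refine ae_of_all _ fun r hr => ?_
        set U := (if r ≤ a then (b/a)*r else (b/a)*(2*a-r)) with hU
        have h1 : (0:ℝ) ≤ s * U ^ 2 := mul_nonneg hs.le (sq_nonneg _)
        have hbase : (0:ℝ) < 1 + s * U ^ 2 := by linarith
        have hpow : (0:ℝ) < (1 + s * U ^ 2) ^ γ := Real.rpow_pos_of_pos hbase γ
        have hber : 1 + γ * s * U ^ 2 ≤ (1 + s * U ^ 2) ^ γ := by
          have h := one_add_mul_self_le_rpow_one_add (by linarith : (-1:ℝ) ≤ s * U ^ 2)
            (by linarith : (1:ℝ) ≤ γ)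
          calc 1 + γ * s * U ^ 2 = 1 + γ * (s * U ^ 2) := by ring
            _ ≤ _ := h
        have hle1 : (1 + γ * s * U ^ 2) / (1 + s * U ^ 2) ^ γ ≤ 1 :=
          (div_le_one hpow).2 hber
        simp only [Pi.zero_apply]
        exact mul_nonneg (by linarith) hr.1.le
      · have : IntegrableOn (fun r : ℝ => r) (Set.Ioc (0:ℝ) (2*a)) volume :=
          continuous_id.integrableOn_Ioc
        exact this
      · rw [Filter.EventuallyLE, ae_restrict_iff' measurableSet_Ioc]
        refine ae_of_all _ fun r hr => ?_
        set U := (if r ≤ a then (b/a)*r else (b/a)*(2*a-r)) with hU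
        have h1 : (0:ℝ) ≤ s * U ^ 2 := mul_nonneg hs.le (sq_nonneg _)
        have hbase : (0:ℝ) < 1 + s * U ^ 2 := by linarith
        have hpow : (0:ℝ) < (1 + s * U ^ 2) ^ γ := Real.rpow_pos_of_pos hbase γ
        have hr1 : 0 ≤ (1 + γ * s * U ^ 2) / (1 + s * U ^ 2) ^ γ := by
          apply div_nonneg _ hpow.le
          nlinarith [sq_nonneg U]
        calc (1 - (1 + γ * s * U ^ 2) / (1 + s * U ^ 2) ^ γ) * r
            ≤ 1 * r := mul_le_mul_of_nonneg_right (by linarith) hr.1.le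
          _ = r := one_mul r
    have hI3 : 0 ≤ ∫ r in Set.Ioc (0:ℝ) (2*a),
        ((if r ≤ a then (b/a)*r else (b/a)*(2*a-r))) ^ 4 /
          (1 + s * ((if r ≤ a then (b/a)*r else (b/a)*(2*a-r))) ^ 2) ^ γ * r := by
      apply setIntegral_nonneg measurableSet_Ioc
      intro r hr
      set U := (if r ≤ a then (b/a)*r else (b/a)*(2*a-r)) with hU
      have h1 : (0:ℝ) ≤ s * U ^ 2 := mul_nonneg hs.le (sq_nonneg _)
      have hpow : (0:ℝ) < (1 + s * U ^ 2) ^ γ :=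
        Real.rpow_pos_of_pos (by linarith) γ
      have h4 : (0:ℝ) ≤ U ^ 4 := by positivity
      exact mul_nonneg (div_nonneg h4 hpow.le) hr.1.le
    have hcoef2 : (0:ℝ) < 1 / (s ^ 2 * (γ - 1) * (γ - 2)) := by positivity
    have hcoef3 : (0:ℝ) < 1 / (γ - 2) := by positivity
    have step : (1/2) * (2*b^2 + (n:ℝ)^2*b^2*(4*Real.log 2 - 2))
          + (1 / (s ^ 2 * (γ - 1) * (γ - 2))) * (∫ r in Set.Ioc (0:ℝ) (2*a),
              (1 - (1 + γ * s * ((if r ≤ a then (b/a)*r else (b/a)*(2*a-r))) ^ 2) /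
                (1 + s * ((if r ≤ a then (b/a)*r else (b/a)*(2*a-r))) ^ 2) ^ γ) * r)
          - (1 / (γ - 2)) * (∫ r in Set.Ioc (0:ℝ) (2*a),
              ((if r ≤ a then (b/a)*r else (b/a)*(2*a-r))) ^ 4 /
                (1 + s * ((if r ≤ a then (b/a)*r else (b/a)*(2*a-r))) ^ 2) ^ γ * r)
        ≤ K * b ^ 2 + (1 / (s ^ 2 * (γ - 1) * (γ - 2))) * (2 * a ^ 2) := by
      rw [hkin]
      have c1 := mul_le_mul_of_nonneg_left hI2 hcoef2.le
      have c2 := mul_nonneg hcoef3.le hI3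
      linarith
    refine le_trans step ?_
    have hsq : (0:ℝ) < Real.sqrt (C / K) := Real.sqrt_pos.2 hCK
    have step1 : (1 / (s ^ 2 * (γ - 1) * (γ - 2))) * (2 * a ^ 2) = C / b ^ 2 := by
      rw [ha2, hCdef]
      field_simp
      ring
    have step2 : K * b ^ 2 = Real.sqrt (K * C) := by
      rw [hb2]
      have h : K * C = K ^ 2 * (C / K) := by field_simp
      rw [h, Real.sqrt_mul (sq_nonneg K), Real.sqrt_sq hK0.le]
    have step3 : C / b ^ 2 = Real.sqrt (K * C) := by
      rw [hb2, div_eq_iff (ne_of_gt hsq), ← Real.sqrt_mul (by positivity : (0:ℝ) ≤ K * C)]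
      have h : K * C * (C / K) = C ^ 2 := by field_simp
      rw [h, Real.sqrt_sq hC.le]
    rw [step1, step2, step3]
    have step4 : Real.sqrt (K * C) + Real.sqrt (K * C) = Real.sqrt (4 * (K * C)) := by
      have h4 : Real.sqrt (4 * (K * C)) = Real.sqrt 4 * Real.sqrt (K * C) :=
        Real.sqrt_mul (by norm_num) _
      have h2 : Real.sqrt 4 = 2 := by
        rw [show (4:ℝ) = 2 ^ 2 by norm_num]
        exact Real.sqrt_sq (by norm_num)
      rw [h4, h2]; ring
    rw [step4]
    apply le_of_eq
    congr 1
    rw [hCdef]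
    field_simp
    ring
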